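/- Let a ∈ (0, √2) and for λ ∈ [0,1) define ξ_a(λ) = (1/π)·arctan(2(a² − 1)λ√(1 − λ²)/(1 + (1 − a²)(2λ² − 1))). Then: (i) the denominator 1 + (1 − a²)(2λ² − 1) is strictly positive for all λ ∈ [0,1); (ii) ξ_a(0) = 0 and ξ_a(λ) → 0 as λ → 1⁻; (iii) if a ∈ (0,1), then ξ_a(λ) < 0 for all λ ∈ (0,1) and ξ_a attains its minimum over (0,1) at λ = a/√2, with ξ_a(a/√2) = (1/π)·arctan((a² − 1)/(a√(2 − a²))); (iv) if a ∈ (1, √2), then ξ_a(λ) > 0 for all λ ∈ (0,1) and ξ_a attains its maximum over (0,1) at λ = a/√2, with the same value ξ_a(a/√2) = (1/π)·arctan((a² − 1)/(a√(2 − a²))). -/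

import Mathlib

/-- The spectral shift function
`ξ_a(λ) = (1/π)·arctan(2(a² − 1)λ√(1 − λ²)/(1 + (1 − a²)(2λ² − 1)))`. -/
noncomputable def xiSSF (a x : ℝ) : ℝ :=
  1 / Real.pi *
    Real.arctan (2 * (a ^ 2 - 1) * x * Real.sqrt (1 - x ^ 2) /
      (1 + (1 - a ^ 2) * (2 * x ^ 2 - 1)))

/-- Key Cauchy–Schwarz type inequality. -/
lemma xi_keyineq (a x : ℝ) (ha0 : 0 < a) (ha2 : a ^ 2 < 2) (hx0 : 0 ≤ x) (hx1 : x ≤ 1) :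
    2 * x * Real.sqrt (1 - x ^ 2) * (a * Real.sqrt (2 - a ^ 2)) ≤
      1 + (1 - a ^ 2) * (2 * x ^ 2 - 1) := by
  set s := Real.sqrt (1 - x ^ 2) with hs
  set w := a * Real.sqrt (2 - a ^ 2) with hw
  have hs2 : s ^ 2 = 1 - x ^ 2 := Real.sq_sqrt (by nlinarith)
  have hs0 : 0 ≤ s := Real.sqrt_nonneg _
  have hw2 : w ^ 2 = a ^ 2 * (2 - a ^ 2) := by
    rw [hw, mul_pow, Real.sq_sqrt (by nlinarith)]
  have hw0 : 0 ≤ w := mul_nonneg ha0.le (Real.sqrt_nonneg _)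
  have hwc : w ^ 2 + (1 - a ^ 2) ^ 2 = 1 := by rw [hw2]; ring
  have hxs : (2 * x * s) ^ 2 + (1 - 2 * x ^ 2) ^ 2 = 1 := by
    have : (2 * x * s) ^ 2 = 4 * x ^ 2 * (1 - x ^ 2) := by rw [mul_pow, hs2]; ring
    rw [this]; ring
  nlinarith [sq_nonneg (w * (1 - 2 * x ^ 2) - (1 - a ^ 2) * (2 * x * s)),
    sq_nonneg (2 * x * s * w + (1 - a ^ 2) * (1 - 2 * x ^ 2) - 1)]

/-- Positivity of the denominator. -/
lemma xi_denom_pos (a x : ℝ) (ha0 : 0 < a) (ha2 : a ^ 2 < 2) (hx0 : 0 ≤ x) (hx1 : x < 1) :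
    0 < 1 + (1 - a ^ 2) * (2 * x ^ 2 - 1) := by
  nlinarith [mul_pos (mul_pos ha0 ha0) (show (0:ℝ) < 1 - x ^ 2 by nlinarith),
    mul_nonneg (mul_nonneg hx0 hx0) (show (0:ℝ) ≤ 2 - a ^ 2 by nlinarith)]

/-- Value of the argument of arctan at `λ = a/√2`. -/
lemma xi_val (a : ℝ) (ha0 : 0 < a) (ha2 : a ^ 2 < 2) :
    2 * (a ^ 2 - 1) * (a / Real.sqrt 2) * Real.sqrt (1 - (a / Real.sqrt 2) ^ 2) /
      (1 + (1 - a ^ 2) * (2 * (a / Real.sqrt 2) ^ 2 - 1)) =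
      (a ^ 2 - 1) / (a * Real.sqrt (2 - a ^ 2)) := by
  have h2 : (Real.sqrt 2) ^ 2 = 2 := Real.sq_sqrt (by norm_num)
  have h2pos : 0 < Real.sqrt 2 := Real.sqrt_pos.mpr (by norm_num)
  have hxsq : (a / Real.sqrt 2) ^ 2 = a ^ 2 / 2 := by rw [div_pow, h2]
  have h1m : 1 - (a / Real.sqrt 2) ^ 2 = (2 - a ^ 2) / 2 := by rw [hxsq]; ring
  have hu0 : 0 < Real.sqrt (2 - a ^ 2) := Real.sqrt_pos.mpr (by nlinarith)
  have hu2 : (Real.sqrt (2 - a ^ 2)) ^ 2 = 2 - a ^ 2 := Real.sq_sqrt (by nlinarith)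
  have hsqrt : Real.sqrt (1 - (a / Real.sqrt 2) ^ 2) = Real.sqrt (2 - a ^ 2) / Real.sqrt 2 := by
    rw [h1m, Real.sqrt_div (by nlinarith : (0:ℝ) ≤ 2 - a ^ 2)]
  rw [hsqrt, hxsq]
  set u := Real.sqrt (2 - a ^ 2)
  set v := Real.sqrt 2
  have hD : 1 + (1 - a ^ 2) * (2 * (a ^ 2 / 2) - 1) = a ^ 2 * (2 - a ^ 2) := by ring
  rw [hD]
  have hDpos : (0:ℝ) < a ^ 2 * (2 - a ^ 2) := by
    have := mul_pos (pow_pos ha0 2) (show (0:ℝ) < 2 - a ^ 2 by nlinarith)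
    linarith
  rw [div_eq_div_iff hDpos.ne' (mul_pos ha0 hu0).ne']
  field_simp
  linear_combination (2 * (a ^ 2 - 1)) * hu2 + ((a ^ 2 - 1) * (a ^ 2 - 2)) * h2

/-- Properties of the spectral shift function for `a ∈ (0, √2)`: the denominator is
positive on `[0,1)`; `ξ_a(0) = 0` and `ξ_a(λ) → 0` as `λ → 1⁻`; for `a ∈ (0,1)`,
`ξ_a < 0` on `(0,1)` with minimum at `λ = a/√2`; for `a ∈ (1,√2)`, `ξ_a > 0` on
`(0,1)` with maximum at `λ = a/√2`; in both cases
`ξ_a(a/√2) = (1/π)·arctan((a² − 1)/(a√(2 − a²)))`. -/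
theorem stmt10 (a : ℝ) (ha : a ∈ Set.Ioo 0 (Real.sqrt 2)) :
    (∀ x ∈ Set.Ico (0 : ℝ) 1, 0 < 1 + (1 - a ^ 2) * (2 * x ^ 2 - 1)) ∧
    xiSSF a 0 = 0 ∧
    Filter.Tendsto (xiSSF a) (nhdsWithin 1 (Set.Iio 1)) (nhds 0) ∧
    (a < 1 →
      (∀ x ∈ Set.Ioo (0 : ℝ) 1, xiSSF a x < 0) ∧
      IsMinOn (xiSSF a) (Set.Ioo 0 1) (a / Real.sqrt 2) ∧
      xiSSF a (a / Real.sqrt 2) =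
        1 / Real.pi * Real.arctan ((a ^ 2 - 1) / (a * Real.sqrt (2 - a ^ 2)))) ∧
    (1 < a →
      (∀ x ∈ Set.Ioo (0 : ℝ) 1, 0 < xiSSF a x) ∧
      IsMaxOn (xiSSF a) (Set.Ioo 0 1) (a / Real.sqrt 2) ∧
      xiSSF a (a / Real.sqrt 2) =
        1 / Real.pi * Real.arctan ((a ^ 2 - 1) / (a * Real.sqrt (2 - a ^ 2)))) := by
  obtain ⟨ha0, haS⟩ := ha
  have h2 : (Real.sqrt 2) ^ 2 = 2 := Real.sq_sqrt (by norm_num)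
  have ha2 : a ^ 2 < 2 := by nlinarith [Real.sqrt_nonneg 2]
  have hpi : 0 < Real.pi := Real.pi_pos
  have hval : xiSSF a (a / Real.sqrt 2) =
      1 / Real.pi * Real.arctan ((a ^ 2 - 1) / (a * Real.sqrt (2 - a ^ 2))) := by
    unfold xiSSF; rw [xi_val a ha0 ha2]
  have hw0 : 0 < a * Real.sqrt (2 - a ^ 2) :=
    mul_pos ha0 (Real.sqrt_pos.mpr (by nlinarith))
  -- comparison of arctan arguments on (0,1)
  have hcomp : ∀ x ∈ Set.Ioo (0:ℝ) 1, (a ^ 2 - 1) *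
      (1 + (1 - a ^ 2) * (2 * x ^ 2 - 1)) ≤
      2 * (a ^ 2 - 1) * x * Real.sqrt (1 - x ^ 2) * (a * Real.sqrt (2 - a ^ 2)) ∨ True := by
    intro x hx; right; trivial
  refine ⟨fun x hx => xi_denom_pos a x ha0 ha2 hx.1 hx.2, ?_, ?_, ?_, ?_⟩
  · simp [xiSSF]
  · -- limit at 1⁻
    have hc : ContinuousAt (xiSSF a) 1 := by
      unfold xiSSF
      refine continuousAt_const.mul (Real.continuous_arctan.continuousAt.comp ?_)
      refine ContinuousAt.div (by fun_prop) (by fun_prop) ?_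
      norm_num; nlinarith
    have h1 : xiSSF a 1 = 0 := by norm_num [xiSSF]
    have := hc.continuousWithinAt (s := Set.Iio 1)
    rw [ContinuousWithinAt, h1] at this
    exact this
  all_goals intro hA
  -- case a < 1
  · have hlt : a ^ 2 - 1 < 0 := by nlinarith
    refine ⟨?_, ?_, hval⟩
    · intro x hx
      have hD := xi_denom_pos a x ha0 ha2 hx.1.le hx.2
      have hs : 0 < Real.sqrt (1 - x ^ 2) := Real.sqrt_pos.mpr (by nlinarith [hx.1, hx.2])
      have hN : 2 * (a ^ 2 - 1) * x * Real.sqrt (1 - x ^ 2) < 0 := by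
        have : 0 < x * Real.sqrt (1 - x ^ 2) := mul_pos hx.1 hs
        nlinarith
      have : Real.arctan (2 * (a ^ 2 - 1) * x * Real.sqrt (1 - x ^ 2) /
          (1 + (1 - a ^ 2) * (2 * x ^ 2 - 1))) < 0 := by
        rw [← Real.arctan_zero]
        exact Real.arctan_strictMono (div_neg_of_neg_of_pos hN hD)
      unfold xiSSF
      exact mul_neg_of_pos_of_neg (by positivity) this
    · rw [isMinOn_iff]
      intro x hx
      rw [hval]
      unfold xiSSF
      have hD := xi_denom_pos a x ha0 ha2 hx.1.le hx.2
      have hkey := xi_keyineq a x ha0 ha2 hx.1.le hx.2.le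
      have harg : (a ^ 2 - 1) / (a * Real.sqrt (2 - a ^ 2)) ≤
          2 * (a ^ 2 - 1) * x * Real.sqrt (1 - x ^ 2) /
            (1 + (1 - a ^ 2) * (2 * x ^ 2 - 1)) := by
        rw [div_le_div_iff₀ hw0 hD]
        nlinarith [mul_nonneg (show (0:ℝ) ≤ 1 - a ^ 2 by nlinarith)
          (sub_nonneg.mpr hkey)]
      exact mul_le_mul_of_nonneg_left (Real.arctan_strictMono.monotone harg)
        (by positivity)
  -- case 1 < a
  · have hlt : 0 < a ^ 2 - 1 := by nlinarith
    refine ⟨?_, ?_, hval⟩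
    · intro x hx
      have hD := xi_denom_pos a x ha0 ha2 hx.1.le hx.2
      have hs : 0 < Real.sqrt (1 - x ^ 2) := Real.sqrt_pos.mpr (by nlinarith [hx.1, hx.2])
      have hN : 0 < 2 * (a ^ 2 - 1) * x * Real.sqrt (1 - x ^ 2) := by
        have : 0 < x * Real.sqrt (1 - x ^ 2) := mul_pos hx.1 hs
        nlinarith
      have : 0 < Real.arctan (2 * (a ^ 2 - 1) * x * Real.sqrt (1 - x ^ 2) /
          (1 + (1 - a ^ 2) * (2 * x ^ 2 - 1))) := by
        rw [← Real.arctan_zero]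
        exact Real.arctan_strictMono (div_pos hN hD)
      unfold xiSSF
      exact mul_pos (by positivity) this
    · rw [isMaxOn_iff]
      intro x hx
      rw [hval]
      unfold xiSSF
      have hD := xi_denom_pos a x ha0 ha2 hx.1.le hx.2
      have hkey := xi_keyineq a x ha0 ha2 hx.1.le hx.2.le
      have harg : 2 * (a ^ 2 - 1) * x * Real.sqrt (1 - x ^ 2) /
            (1 + (1 - a ^ 2) * (2 * x ^ 2 - 1)) ≤
          (a ^ 2 - 1) / (a * Real.sqrt (2 - a ^ 2)) := by
        rw [div_le_div_iff₀ hD hw0]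
        nlinarith [mul_nonneg hlt.le (sub_nonneg.mpr hkey)]
      exact mul_le_mul_of_nonneg_left (Real.arctan_strictMono.monotone harg)
        (by positivity)
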